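/- Under the semi-graphoid axioms plus the intersection property, for any variable v and any subset U ⊆ V \ {v}, the conditional Markov blanket of v given U is uniquely determined and equals mb(v) \ U, where mb(v) is the unique minimal Markov blanket of v. -/

import Mathlib

/-- `C` is a conditional Markov blanket of `v` given `U`: conditioning on `C ∪ U`
renders `v` independent of every other set of variables. -/
def IsCMB {V : Type*} [Fintype V] [DecidableEq V]
    (CI : Finset V → Finset V → Finset V → Prop) (v : V) (U C : Finset V) : Prop :=
  ∀ W ⊆ Finset.univ \ (C ∪ U ∪ {v}), CI {v} W (C ∪ U)

/-- Intersection of two Markov blankets is a Markov blanket. -/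
lemma blanket_inter
    {V : Type*} [Fintype V] [DecidableEq V]
    (CI : Finset V → Finset V → Finset V → Prop)
    (hWU : ∀ X Y Z S, CI X (Y ∪ Z) S → CI X Y (Z ∪ S))
    (hInt : ∀ X Y Z S, CI X Y (Z ∪ S) → CI X Z (Y ∪ S) → CI X (Y ∪ Z) S)
    (v : V) (B1 B2 : Finset V) (hv1 : v ∉ B1) (hv2 : v ∉ B2)
    (h1 : CI {v} (Finset.univ \ (B1 ∪ {v})) B1)
    (h2 : CI {v} (Finset.univ \ (B2 ∪ {v})) B2) :
    CI {v} (Finset.univ \ ((B1 ∩ B2) ∪ {v})) (B1 ∩ B2) := by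
  classical
  set A := B1 \ B2 with hA
  set B := B2 \ B1 with hB
  set C := B1 ∩ B2 with hC
  set R := Finset.univ \ (B1 ∪ B2 ∪ {v}) with hR
  have e1 : Finset.univ \ (B1 ∪ {v}) = B ∪ R := by
    ext x; simp [hB, hR, Finset.mem_union, Finset.mem_sdiff]
    constructor
    · intro ⟨h1, h2⟩
      by_cases hx : x ∈ B2
      · exact Or.inl ⟨hx, h2⟩
      · exact Or.inr ⟨h1, h2, hx⟩
    · rintro (⟨h1, h2⟩ | ⟨h1, h2, h3⟩)
      · exact ⟨fun hv => hv2 (hv ▸ h1), h2⟩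
      · exact ⟨h1, h2⟩
  have e1' : B1 = A ∪ C := by
    ext x; simp [hA, hC]; tauto
  have e2 : Finset.univ \ (B2 ∪ {v}) = A ∪ R := by
    ext x; simp [hA, hR, Finset.mem_union, Finset.mem_sdiff]
    constructor
    · intro ⟨h1, h2⟩
      by_cases hx : x ∈ B1
      · exact Or.inl ⟨hx, h2⟩
      · exact Or.inr ⟨h1, hx, h2⟩
    · rintro (⟨h1, h2⟩ | ⟨h1, h2, h3⟩)
      · exact ⟨fun hv => hv1 (hv ▸ h1), h2⟩
      · exact ⟨h1, h3⟩
  have e2' : B2 = B ∪ C := by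
    ext x; simp [hB, hC]; tauto
  rw [e1, e1'] at h1
  rw [e2, e2'] at h2
  -- h1 : CI {v} (B ∪ R) (A ∪ C), h2 : CI {v} (A ∪ R) (B ∪ C)
  have hB' : CI {v} B (R ∪ (A ∪ C)) := hWU _ _ _ _ h1
  have hR1 : CI {v} R (B ∪ (A ∪ C)) := by
    have h1' : CI {v} (R ∪ B) (A ∪ C) := by
      rwa [Finset.union_comm R B]
    exact hWU _ _ _ _ h1'
  have hA' : CI {v} A (R ∪ (B ∪ C)) := hWU _ _ _ _ h2
  have hBA : CI {v} (B ∪ A) (R ∪ C) := by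
    apply hInt
    · rw [show A ∪ (R ∪ C) = R ∪ (A ∪ C) by
        ext x; simp [Finset.mem_union]; tauto]
      exact hB'
    · rw [show B ∪ (R ∪ C) = R ∪ (B ∪ C) by
        ext x; simp [Finset.mem_union]; tauto]
      exact hA'
  have hfin : CI {v} ((B ∪ A) ∪ R) C := by
    apply hInt
    · exact hBA
    · rw [Finset.union_assoc]
      exact hR1
  have efin : (B ∪ A) ∪ R = Finset.univ \ (C ∪ {v}) := by
    ext x
    by_cases hxv : x = v
    · subst hxv
      simp [hA, hB, hC, hR, hv1, hv2]
    · simp only [hA, hB, hC, hR, Finset.mem_union, Finset.mem_sdiff, Finset.mem_inter,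
        Finset.mem_singleton, Finset.mem_univ, true_and, hxv, or_false, and_true,
        not_false_iff, and_false, false_or]
      tauto
  rwa [efin] at hfin

/-- under the semi-graphoid axioms plus the intersection property, for any
variable `v` and any `U ⊆ V \ {v}`, the conditional Markov blanket of `v` given `U`
is uniquely determined and equals `mb(v) \ U`, where `M = mb(v)` is the unique minimal
Markov blanket of `v`. -/
theorem conditional_markov_blanket_eq
    {V : Type*} [Fintype V] [DecidableEq V]
    (CI : Finset V → Finset V → Finset V → Prop)
    (hTriv : ∀ X S, CI X ∅ S)
    (hSym : ∀ X Y S, CI X Y S → CI Y X S)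
    (hDec : ∀ X Y Z S, CI X (Y ∪ Z) S → CI X Y S)
    (hWU : ∀ X Y Z S, CI X (Y ∪ Z) S → CI X Y (Z ∪ S))
    (hContr : ∀ X Y Z S, CI X Y S → CI X Z (Y ∪ S) → CI X (Y ∪ Z) S)
    (hInt : ∀ X Y Z S, CI X Y (Z ∪ S) → CI X Z (Y ∪ S) → CI X (Y ∪ Z) S)
    (v : V) (U : Finset V) (hU : U ⊆ Finset.univ \ {v})
    (M : Finset V) (hMsub : M ⊆ Finset.univ \ {v})
    (hMmb : CI {v} (Finset.univ \ (M ∪ {v})) M)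
    (hMmin : ∀ M' ⊂ M, ¬ CI {v} (Finset.univ \ (M' ∪ {v})) M') :
    IsCMB CI v U (M \ U) ∧
    (∀ C' ⊂ M \ U, ¬ IsCMB CI v U C') ∧
    (∀ C ⊆ Finset.univ \ (U ∪ {v}), IsCMB CI v U C →
      (∀ C' ⊂ C, ¬ IsCMB CI v U C') → C = M \ U) := by
  classical
  have hvU : v ∉ U := fun h => (Finset.mem_sdiff.mp (hU h)).2 (Finset.mem_singleton_self v)
  have hvM : v ∉ M := fun h => (Finset.mem_sdiff.mp (hMsub h)).2 (Finset.mem_singleton_self v)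
  -- Any Markov blanket (not containing v) contains M.
  have hMle : ∀ B : Finset V, v ∉ B → CI {v} (Finset.univ \ (B ∪ {v})) B → M ⊆ B := by
    intro B hvB hB
    have hint := blanket_inter CI hWU hInt v M B hvM hvB hMmb hB
    by_contra hnot
    have hss : M ∩ B ⊂ M := by
      refine ⟨Finset.inter_subset_left, fun hle => ?_⟩
      exact hnot (fun x hx => (Finset.mem_inter.mp (hle hx)).2)
    exact hMmin _ hss hint
  -- Part 1
  have part1 : IsCMB CI v U (M \ U) := by
    intro W hW
    have e0 : M \ U ∪ U = M ∪ U := Finset.sdiff_union_self_eq_union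
    have e1 : Finset.univ \ (M ∪ {v}) =
        (Finset.univ \ (M ∪ U ∪ {v})) ∪ (U \ M) := by
      ext x
      by_cases hxv : x = v
      · subst hxv
        simp [hvU, hvM]
      · simp only [Finset.mem_union, Finset.mem_sdiff, Finset.mem_singleton,
          Finset.mem_univ, true_and, hxv, or_false]
        tauto
    have hMmb' : CI {v} ((Finset.univ \ (M ∪ U ∪ {v})) ∪ (U \ M)) M := e1 ▸ hMmb
    have step1 := hWU _ _ _ _ hMmb'
    -- step1 : CI {v} (univ \ (M ∪ U ∪ {v})) ((U \ M) ∪ M)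
    have e2 : (U \ M) ∪ M = M ∪ U := by ext x; simp; tauto
    rw [e2] at step1
    have e3 : Finset.univ \ (M \ U ∪ U ∪ {v}) = Finset.univ \ (M ∪ U ∪ {v}) := by
      rw [Finset.sdiff_union_self_eq_union]
    rw [e3] at hW
    rw [show Finset.univ \ (M ∪ U ∪ {v}) = W ∪ ((Finset.univ \ (M ∪ U ∪ {v})) \ W) from
      (Finset.union_sdiff_of_subset hW).symm] at step1
    have := hDec _ _ _ _ step1
    rwa [e0]
  -- helper: a CMB C (disjoint from U, not containing v) gives a blanket C ∪ U
  have hblanket : ∀ C : Finset V, C ⊆ Finset.univ \ (U ∪ {v}) → IsCMB CI v U C →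
      CI {v} (Finset.univ \ ((C ∪ U) ∪ {v})) (C ∪ U) := by
    intro C hCsub hC
    have := hC (Finset.univ \ (C ∪ U ∪ {v})) (Finset.Subset.refl _)
    exact this
  refine ⟨part1, ?_, ?_⟩
  · -- Part 2: no proper subset of M \ U is a CMB
    intro C' hC' hCmb
    have hC'sub : C' ⊆ Finset.univ \ (U ∪ {v}) := by
      intro x hx
      have hxMU := hC'.1 hx
      simp only [Finset.mem_sdiff] at hxMU
      simp only [Finset.mem_sdiff, Finset.mem_union, Finset.mem_singleton]
      refine ⟨Finset.mem_univ x, ?_⟩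
      rintro (h | rfl)
      · exact hxMU.2 h
      · exact hvM hxMU.1
    have hvC' : v ∉ C' ∪ U := by
      simp only [Finset.mem_union]
      rintro (h | h)
      · exact (Finset.mem_sdiff.mp (hC'sub h)).2 (by simp)
      · exact hvU h
    have hbl := hblanket C' hC'sub hCmb
    have hMsubB : M ⊆ C' ∪ U := hMle _ hvC' hbl
    have hle : M \ U ⊆ C' := by
      intro x hx
      simp only [Finset.mem_sdiff] at hx
      have := hMsubB hx.1
      simp only [Finset.mem_union] at this
      tauto
    exact hC'.not_subset hle
  · -- Part 3: uniqueness
    intro C hCsub hC hCmin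
    have hvC : v ∉ C ∪ U := by
      simp only [Finset.mem_union]
      rintro (h | h)
      · exact (Finset.mem_sdiff.mp (hCsub h)).2 (by simp)
      · exact hvU h
    have hbl := hblanket C hCsub hC
    have hMsubB : M ⊆ C ∪ U := hMle _ hvC hbl
    have hsub : M \ U ⊆ C := by
      intro x hx
      simp only [Finset.mem_sdiff] at hx
      have := hMsubB hx.1
      simp only [Finset.mem_union] at this
      tauto
    by_contra hne
    have hss : M \ U ⊂ C := Finset.ssubset_iff_subset_ne.mpr ⟨hsub, fun h => hne h.symm⟩
    exact hCmin _ hss part1
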